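/- Let d ≥ 1 and let β ∈ {0,1}^d be nonzero with |β| = Σᵢ βᵢ. Define g_β(r,t) ∈ ℤ^{{0,1}^d} by g_β(r,t)_a = r if β·a is even and t if β·a is odd. Then the vector g_β(d, d-|β|) - d·𝟙 has order 2|β|+1 in the cokernel of the transpose of the reduced Laplacian of the cone c(Q_d), i.e., (2|β|+1)·(g_β(d,d-|β|) - d·𝟙) ∈ Im L(c(Q_d),s)^T and k·(g_β(d,d-|β|) - d·𝟙) ∉ Im L(c(Q_d),s)^T for 1 ≤ k ≤ 2|β|. -/

import Mathlib

open Matrix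

/-- The Laplacian matrix of the hypercube `Q_d`, with vertex set `{0,1}^d` and
edges between vectors differing in exactly one coordinate. -/
def cubeLap (d : ℕ) : Matrix (Fin d → ZMod 2) (Fin d → ZMod 2) ℤ := fun a b =>
  if a = b then (d : ℤ)
  else if (Finset.univ.filter fun i => a i ≠ b i).card = 1 then -1 else 0

namespace Stmt12Aux
variable {d : ℕ}

def flip (a : Fin d → ZMod 2) (i : Fin d) : Fin d → ZMod 2 :=
  Function.update a i (a i + 1)

lemma zmod2_ne {x y : ZMod 2} : x ≠ y ↔ x = y + 1 := by revert x y; decide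

lemma zmod2_add_one_ne (x : ZMod 2) : x + 1 ≠ x := by revert x; decide

lemma flip_apply_self (a : Fin d → ZMod 2) (i : Fin d) : flip a i i = a i + 1 := by
  simp [flip]

lemma flip_apply_ne (a : Fin d → ZMod 2) {i j : Fin d} (h : j ≠ i) : flip a i j = a j :=
  Function.update_of_ne h _ _

lemma neighbor_iff (a b : Fin d → ZMod 2) :
    (Finset.univ.filter fun i => a i ≠ b i).card = 1 ↔ ∃ i, b = flip a i := by
  rw [Finset.card_eq_one]
  constructor
  · rintro ⟨i, hi⟩
    refine ⟨i, funext fun j => ?_⟩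
    by_cases hj : j = i
    · subst hj
      have h1 : j ∈ Finset.univ.filter fun i => a i ≠ b i := hi ▸ Finset.mem_singleton_self j
      have h2 := (Finset.mem_filter.mp h1).2
      rw [flip_apply_self]
      exact zmod2_ne.mp (Ne.symm h2)
    · have h1 : j ∉ Finset.univ.filter fun i => a i ≠ b i := by
        rw [hi]; simpa using hj
      have h2 : a j = b j := by simpa using h1
      rw [flip_apply_ne a hj, h2]
  · rintro ⟨i, rfl⟩
    refine ⟨i, ?_⟩
    ext j
    simp only [Finset.mem_filter, Finset.mem_univ, true_and, Finset.mem_singleton]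
    constructor
    · intro hj
      by_contra hji
      exact hj (flip_apply_ne a hji).symm
    · rintro rfl
      rw [flip_apply_self]
      exact (zmod2_add_one_ne (a j)).symm

lemma flip_inj (a : Fin d → ZMod 2) : Function.Injective (flip a) := by
  intro i j h
  by_contra hij
  have h1 := congrFun h i
  rw [flip_apply_self, flip_apply_ne a hij] at h1
  exact zmod2_add_one_ne (a i) h1

lemma cubeLap_entry (a b : Fin d → ZMod 2) :
    (cubeLap d + 1) a b = (if a = b then (d:ℤ) + 1 else 0) -
      (if (Finset.univ.filter fun i => a i ≠ b i).card = 1 then 1 else 0) := by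
  simp only [Matrix.add_apply, Matrix.one_apply, cubeLap]
  by_cases h : a = b
  · subst h
    simp
  · simp only [h, if_false]
    split <;> ring

lemma filter_neighbors (a : Fin d → ZMod 2) :
    (Finset.univ.filter fun b => (Finset.univ.filter fun i => a i ≠ b i).card = 1) =
      Finset.image (flip a) Finset.univ := by
  ext b
  simp only [Finset.mem_filter, Finset.mem_univ, true_and, Finset.mem_image,
    neighbor_iff]
  exact exists_congr fun i => eq_comm

lemma mulVec_eq (v : (Fin d → ZMod 2) → ℤ) (a : Fin d → ZMod 2) :
    ((cubeLap d + 1) *ᵥ v) a = ((d:ℤ)+1) * v a - ∑ i, v (flip a i) := by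
  rw [Matrix.mulVec]
  show (∑ b, (cubeLap d + 1) a b * v b) = _
  have h1 : ∀ b, (cubeLap d + 1) a b * v b =
      (if a = b then ((d:ℤ)+1) * v b else 0) -
      (if (Finset.univ.filter fun i => a i ≠ b i).card = 1 then v b else 0) := by
    intro b
    rw [cubeLap_entry]
    split <;> split <;> ring
  simp only [h1]
  rw [Finset.sum_sub_distrib, Finset.sum_ite_eq, if_pos (Finset.mem_univ a)]
  congr 1
  rw [← Finset.sum_filter, filter_neighbors, Finset.sum_image
    (fun i _ j _ h => flip_inj a h)]

def B (β a : Fin d → ZMod 2) : ZMod 2 := ∑ i, β i * a i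

def chi (β : Fin d → ZMod 2) (a : Fin d → ZMod 2) : ℤ := if B β a = 0 then 1 else -1

lemma zmod2_cases (x : ZMod 2) : x = 0 ∨ x = 1 := by revert x; decide

lemma B_flip (β a : Fin d → ZMod 2) (i : Fin d) : B β (flip a i) = B β a + β i := by
  have hfun : (fun j => β j * flip a i j) =
      Function.update (fun j => β j * a j) i (β i * (a i + 1)) := by
    funext j
    by_cases hj : j = i
    · subst hj; simp [flip_apply_self]
    · simp [flip_apply_ne a hj, Function.update_of_ne hj]
  unfold B
  rw [show (∑ j, β j * flip a i j) = ∑ j, Function.update (fun j => β j * a j) i (β i * (a i + 1)) j from by rw [← hfun],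
    Finset.sum_update_of_mem (Finset.mem_univ i),
    Finset.sum_eq_add_sum_sdiff_singleton_of_mem (Finset.mem_univ i) (fun j => β j * a j)]
  ring

lemma chi_flip (β a : Fin d → ZMod 2) (i : Fin d) :
    chi β (flip a i) = (1 - 2 * ((β i).val : ℤ)) * chi β a := by
  have hB := B_flip β a i
  unfold chi
  rcases zmod2_cases (β i) with h | h <;> rcases zmod2_cases (B β a) with hb | hb <;>
    rw [h] at hB <;> rw [hb] at hB <;>
    simp [hB, hb, h, show ((1:ZMod 2) + 1 = 0) from by decide,
      show ((1:ZMod 2) ≠ 0) from by decide,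
      show ((1:ZMod 2)).val = 1 from rfl] <;> norm_num

lemma sum_chi_flip (β a : Fin d → ZMod 2) :
    ∑ i, chi β (flip a i) = ((d:ℤ) - 2 * (∑ i, (β i).val : ℕ)) * chi β a := by
  simp only [chi_flip]
  rw [← Finset.sum_mul]
  congr 1
  rw [Finset.sum_sub_distrib, Finset.sum_const, ← Finset.mul_sum]
  push_cast
  simp [mul_comm]

lemma mulVec_chi (β : Fin d → ZMod 2) (a : Fin d → ZMod 2) :
    ((cubeLap d + 1) *ᵥ chi β) a = (2 * (∑ i, (β i).val : ℕ) + 1 : ℤ) * chi β a := by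
  rw [mulVec_eq, sum_chi_flip]
  ring

lemma mulVec_one' (a : Fin d → ZMod 2) :
    ((cubeLap d + 1) *ᵥ (fun _ => (1:ℤ))) a = 1 := by
  rw [mulVec_eq]
  simp

lemma transpose_eq : (cubeLap d + 1)ᵀ = cubeLap d + 1 := by
  ext a b
  simp only [Matrix.transpose_apply, Matrix.add_apply, Matrix.one_apply, cubeLap]
  have h : (Finset.univ.filter fun i => b i ≠ a i) =
      Finset.univ.filter fun i => a i ≠ b i := by
    apply Finset.filter_congr
    intro i _
    simp [ne_comm]
  by_cases hab : a = b
  · subst hab; rfl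
  · have hba : ¬ b = a := fun hba => hab hba.symm
    rw [h]
    simp [hab, hba]

lemma symm_entry (a b : Fin d → ZMod 2) : (cubeLap d + 1) a b = (cubeLap d + 1) b a := by
  have h := congrFun (congrFun (transpose_eq (d := d)) b) a
  rw [Matrix.transpose_apply] at h
  exact h

lemma phi_mulVec (β : Fin d → ZMod 2) (x : (Fin d → ZMod 2) → ℤ) :
    ∑ a, chi β a * ((cubeLap d + 1) *ᵥ x) a =
      (2 * (∑ i, (β i).val : ℕ) + 1 : ℤ) * ∑ a, chi β a * x a := by
  simp only [Matrix.mulVec, dotProduct]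
  calc ∑ a, chi β a * ∑ b, (cubeLap d + 1) a b * x b
      = ∑ a, ∑ b, (cubeLap d + 1) b a * chi β a * x b := by
        refine Finset.sum_congr rfl fun a _ => ?_
        rw [Finset.mul_sum]
        refine Finset.sum_congr rfl fun b _ => ?_
        rw [symm_entry a b]; ring
    _ = ∑ b, (∑ a, (cubeLap d + 1) b a * chi β a) * x b := by
        rw [Finset.sum_comm]
        simp [Finset.sum_mul]
    _ = ∑ b, ((2 * (∑ i, (β i).val : ℕ) + 1 : ℤ) * chi β b) * x b := by
        refine Finset.sum_congr rfl fun b _ => ?_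
        congr 1
        exact mulVec_chi β b
    _ = _ := by rw [Finset.mul_sum]; refine Finset.sum_congr rfl fun b _ => by ring

lemma flip_flip (a : Fin d → ZMod 2) (j : Fin d) : flip (flip a j) j = a := by
  funext i
  by_cases hij : i = j
  · subst hij
    rw [flip_apply_self, flip_apply_self]
    revert a
    intro a
    have : ∀ x : ZMod 2, x + 1 + 1 = x := by decide
    exact this (a i)
  · rw [flip_apply_ne _ hij, flip_apply_ne _ hij]

lemma card_odd (β : Fin d → ZMod 2) (hβ : β ≠ 0) (hd : 1 ≤ d) :
    (Finset.univ.filter fun a => B β a ≠ 0).card = 2 ^ (d - 1) := by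
  obtain ⟨j, hj⟩ : ∃ j, β j ≠ 0 := by
    by_contra h
    push_neg at h
    exact hβ (funext h)
  have hj1 : β j = 1 := (zmod2_cases (β j)).resolve_left hj
  have hBadd : ∀ a, B β (flip a j) = B β a + 1 := fun a => by rw [B_flip, hj1]
  have hcards : (Finset.univ.filter fun a => B β a = 0).card =
      (Finset.univ.filter fun a => B β a ≠ 0).card := by
    apply Finset.card_bij' (fun a _ => flip a j) (fun a _ => flip a j)
    · intro a ha
      simp only [Finset.mem_filter, Finset.mem_univ, true_and] at ha ⊢
      rw [hBadd, ha]
      decide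
    · intro a ha
      simp only [Finset.mem_filter, Finset.mem_univ, true_and] at ha ⊢
      rw [hBadd]
      rcases zmod2_cases (B β a) with h | h
      · exact absurd h ha
      · rw [h]; decide
    · intro a _; exact flip_flip a j
    · intro a _; exact flip_flip a j
  have htot : (Finset.univ.filter fun a => B β a = 0).card +
      (Finset.univ.filter fun a => B β a ≠ 0).card = 2 ^ d := by
    rw [Finset.card_filter_add_card_filter_not]
    simp [Fintype.card_fun]
  rw [hcards] at htot
  have hpow : 2 ^ d = 2 * 2 ^ (d - 1) := by
    conv_lhs => rw [show d = (d - 1) + 1 from (Nat.succ_pred_eq_of_pos hd).symm]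
    rw [pow_succ]
    ring
  omega

lemma even_iff_B (β a : Fin d → ZMod 2) :
    Even (∑ i, (β i).val * (a i).val) ↔ B β a = 0 := by
  have key : ((∑ i, (β i).val * (a i).val : ℕ) : ZMod 2) = B β a := by
    push_cast
    unfold B
    refine Finset.sum_congr rfl fun i _ => ?_
    rw [ZMod.natCast_val, ZMod.natCast_val, ZMod.cast_id, ZMod.cast_id]
  rw [even_iff_two_dvd, ← ZMod.natCast_eq_zero_iff, key]

end Stmt12Aux

open Stmt12Aux in
/-- For nonzero `β ∈ {0,1}^d`, the vector `g_β(d, d-|β|) - d·𝟙`, where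
`g_β(r,t)_a = r` if `β·a` is even and `t` if odd, has order `2|β|+1` in the
cokernel of the transpose of the reduced Laplacian `L(Q_d) + I` of the cone
`c(Q_d)`. -/
theorem stmt12 (d : ℕ) (hd : 1 ≤ d) (β : Fin d → ZMod 2) (hβ : β ≠ 0) :
    let bnorm : ℕ := ∑ i, (β i).val
    let g : (Fin d → ZMod 2) → ℤ := fun a =>
      if Even (∑ i, (β i).val * (a i).val) then (d : ℤ) else (d : ℤ) - bnorm
    let w : (Fin d → ZMod 2) → ℤ := g - (d : ℤ) • 1
    let Λ := LinearMap.range (Matrix.toLin' (cubeLap d + 1)ᵀ)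
    (((2 * bnorm + 1 : ℕ) : ℤ) • w ∈ Λ) ∧
      ∀ k : ℕ, 1 ≤ k → k ≤ 2 * bnorm → (k : ℤ) • w ∉ Λ := by
  intro bnorm g w Λ
  classical
  set m : ℕ := bnorm with hm
  have hw : w = fun a => if B β a = 0 then (0:ℤ) else -(m:ℤ) := by
    funext a
    show g a - (d:ℤ) • (1 : (Fin d → ZMod 2) → ℤ) a = _
    by_cases h : B β a = 0
    · simp [g, (even_iff_B β a).mpr h, h]
    · have hne : ¬ Even (∑ i, (β i).val * (a i).val) :=
        fun he => h ((even_iff_B β a).mp he)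
      simp [g, hne, h, hm]
  constructor
  · -- positive part
    set x : (Fin d → ZMod 2) → ℤ :=
      fun a => if B β a = 0 then -(m^2 : ℤ) else -(m^2 : ℤ) - m with hxdef
    refine ⟨x, ?_⟩
    rw [Matrix.toLin'_apply, transpose_eq]
    have hx2 : (2:ℤ) • x = (m:ℤ) • chi β - ((m:ℤ) + 2*m^2) • (fun _ => (1:ℤ)) := by
      funext a
      by_cases h : B β a = 0 <;>
        simp [hxdef, chi, h, Pi.smul_apply, Pi.sub_apply] <;> ring
    have hMx2 : (cubeLap d + 1) *ᵥ ((2:ℤ) • x) =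
        fun a => (m:ℤ) * ((2 * (m:ℕ) + 1 : ℤ) * chi β a) - ((m:ℤ) + 2*m^2) * 1 := by
      rw [hx2, Matrix.mulVec_sub, Matrix.mulVec_smul, Matrix.mulVec_smul]
      funext a
      simp only [Pi.sub_apply, Pi.smul_apply, smul_eq_mul]
      rw [mulVec_chi, mulVec_one']
    apply smul_right_injective ((Fin d → ZMod 2) → ℤ) (two_ne_zero (α := ℤ))
    show (2:ℤ) • ((cubeLap d + 1) *ᵥ x) = (2:ℤ) • (((2 * m + 1 : ℕ) : ℤ) • w)
    rw [← Matrix.mulVec_smul, hMx2]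
    funext a
    rw [hw]
    by_cases h : B β a = 0 <;>
      simp [chi, h, Pi.smul_apply, smul_eq_mul] <;> push_cast <;> ring
  · -- negative part
    rintro k hk1 hk2 ⟨x, hx⟩
    rw [Matrix.toLin'_apply, transpose_eq] at hx
    have hphiw : ∑ a, chi β a * w a = (m : ℤ) * 2^(d-1) := by
      rw [hw]
      have step : ∀ a : Fin d → ZMod 2,
          chi β a * (if B β a = 0 then (0:ℤ) else -(m:ℤ)) =
            if B β a = 0 then (0:ℤ) else (m:ℤ) := by
        intro a
        by_cases h : B β a = 0 <;> simp [chi, h]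
      simp only [step]
      rw [Finset.sum_ite, Finset.sum_const, Finset.sum_const]
      have := card_odd β hβ hd
      simp only [smul_zero, zero_add, smul_eq_mul]
      rw [show (Finset.filter (fun a => ¬ B β a = 0) Finset.univ) =
        (Finset.filter (fun a => B β a ≠ 0) Finset.univ) from rfl, this]
      push_cast
      ring
    have hphi := phi_mulVec β x
    rw [hx] at hphi
    have hsum : ∑ a, chi β a * ((k:ℤ) • w) a = (k:ℤ) * ((m : ℤ) * 2^(d-1)) := by
      rw [← hphiw, Finset.mul_sum]
      refine Finset.sum_congr rfl fun a _ => ?_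
      simp [Pi.smul_apply, smul_eq_mul]
      ring
    rw [hsum] at hphi
    have hdvd : ((2*m+1 : ℕ) : ℤ) ∣ ((k * (m * 2^(d-1)) : ℕ) : ℤ) := by
      refine ⟨∑ a, chi β a * x a, ?_⟩
      push_cast
      linarith [hphi]
    have hdvdn : (2*m+1) ∣ k * (m * 2^(d-1)) := Int.natCast_dvd_natCast.mp hdvd
    have hcop : Nat.Coprime (2*m+1) (m * 2^(d-1)) := by
      refine Nat.Coprime.mul_right ?_ ?_
      · simpa [two_mul, add_comm] using Nat.coprime_add_mul_right_left 1 m 2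
      · exact (Nat.coprime_two_right.mpr ⟨m, by ring⟩).pow_right _
    have hdvdk : (2*m+1) ∣ k := hcop.dvd_of_dvd_mul_right hdvdn
    have hle := Nat.le_of_dvd (by omega) hdvdk
    omega
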